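/- There exists a set A contained in the closed unit disc D = {(x,y) ∈ ℝ² : x² + y² ≤ 1} such that A is completely M-nonmeasurable in D (that is, for every nonmeager Borel set B ⊆ D, both A ∩ B and B \ A are nonempty) and, for every angle α ∈ [0, π), the projection π_α[A] = {x·cos α + y·sin α : (x,y) ∈ A} is completely M-nonmeasurable in [-1, 1] (that is, for every nonmeager Borel set B ⊆ [-1,1], both π_α[A] ∩ B and B \ π_α[A] are nonempty). -/

import Mathlib

/-- The signed orthogonal projection onto the line through the origin in
direction `(cos α, sin α)`. -/
noncomputable def proj (α : ℝ) (p : ℝ × ℝ) : ℝ :=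
  p.1 * Real.cos α + p.2 * Real.sin α

/-- The closed unit disc in the plane. -/
def unitDisc : Set (ℝ × ℝ) := {p : ℝ × ℝ | p.1 ^ 2 + p.2 ^ 2 ≤ 1}

/-- `B` is meager in the subspace `Y` (with the subspace topology). -/
def MeagerIn {X : Type*} [TopologicalSpace X] (Y B : Set X) : Prop :=
  IsMeagre {y : Y | (y : X) ∈ B}

open Set Cardinal Filter

def Avoid (F : Set (ℝ × ℝ)) (x : ℝ × ℝ) : Prop :=
  ∀ q ∈ F, q.1 ∈ Ico 0 Real.pi → proj q.1 x ≠ q.2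


-- countable union of meager sets, general countable index
lemma isMeagre_iUnion' {X : Type*} [TopologicalSpace X] {ι : Sort*} [Countable ι]
    {s : ι → Set X} (hs : ∀ i, IsMeagre (s i)) : IsMeagre (⋃ i, s i) := by
  rw [IsMeagre, compl_iUnion]
  exact countable_iInter_mem.mpr hs

lemma nwd_isMeagre {X : Type*} [TopologicalSpace X] {s : Set X} (h : IsNowhereDense s) :
    IsMeagre s := by
  rw [isMeagre_iff_countable_union_isNowhereDense]
  exact ⟨{s}, by simpa using h, countable_singleton _, by simp⟩

lemma open_nonmeager {X : Type*} [TopologicalSpace X] [BaireSpace X] {U : Set X}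
    (hU : IsOpen U) (hne : U.Nonempty) : ¬ IsMeagre U := by
  intro h
  have hd : Dense Uᶜ := dense_of_mem_residual h
  obtain ⟨x, hx⟩ := hne
  obtain ⟨y, hy⟩ := hd.inter_open_nonempty U hU ⟨x, hx⟩
  exact hy.2 hy.1

-- sum trick
lemma continuum_le_diff_meager {M : Set ℝ} (hM : IsMeagre M) {a b : ℝ} (hab : a < b) :
    𝔠 ≤ #(Ioo a b \ M : Set ℝ) := by
  set S : Set ℝ := Ioo a b \ M with hS
  have key : ∀ x ∈ Ioo (a+a) (b+b), ∃ t, t ∈ S ∧ x - t ∈ S := by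
    intro x hx
    have hpre : IsMeagre ((fun t => x - t) ⁻¹' M) :=
      hM.preimage_of_isOpenMap (continuous_const.sub continuous_id)
        (Homeomorph.subLeft x).isOpenMap
    have hM' : IsMeagre (M ∪ (fun t => x - t) ⁻¹' M) := by
      rw [IsMeagre, Set.compl_union]
      exact Filter.inter_mem hM hpre
    set u := max a (x - b) with hu
    set v := min b (x - a) with hv
    have huv : u < v := by
      rcases hx with ⟨h1, h2⟩
      simp only [hu, hv, max_lt_iff, lt_min_iff]
      constructor
      · constructor <;> linarith
      · constructor <;> linarith
    have hnm : ¬ IsMeagre (Ioo u v) := open_nonmeager isOpen_Ioo (nonempty_Ioo.2 huv)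
    have : ¬ (Ioo u v ⊆ M ∪ (fun t => x - t) ⁻¹' M) := fun hsub => hnm (hM'.mono hsub)
    obtain ⟨t, htI, htM⟩ := not_subset.1 this
    refine ⟨t, ⟨⟨?_, ?_⟩, fun h => htM (Or.inl h)⟩, ⟨?_, ?_⟩, fun h => htM (Or.inr h)⟩
    · exact lt_of_le_of_lt (le_max_left _ _) htI.1
    · exact lt_of_lt_of_le htI.2 (min_le_of_left_le le_rfl)
    · have := lt_of_lt_of_le htI.2 (min_le_right b (x - a)); linarith
    · have := lt_of_le_of_lt (le_max_right a (x - b)) htI.1; linarith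
  choose f hf1 hf2 using key
  have hinj : Function.Injective
      (fun x : Ioo (a+a) (b+b) => ((⟨f x x.2, hf1 x x.2⟩ : S), (⟨x - f x x.2, hf2 x x.2⟩ : S))) := by
    rintro ⟨x, hx⟩ ⟨y, hy⟩ h
    simp only [Prod.mk.injEq, Subtype.mk.injEq] at h
    have : (x : ℝ) = y := by
      have h1 := h.1; have h2 := h.2
      linarith [h.1, h.2]
    exact Subtype.ext this
  have h1 : 𝔠 ≤ #(S × S : Type) := by
    rw [← mk_Ioo_real (show a + a < b + b by linarith)]
    exact mk_le_of_injective hinj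
  have h2 : #(S × S : Type) ≤ max #S ℵ₀ := by
    rw [mk_prod]
    exact (mul_le_max _ _).trans (by simp)
  rcases le_max_iff.1 (h1.trans h2) with h | h
  · exact h
  · exact (aleph0_lt_continuum.not_ge h).elim

lemma exists_avoid {M : Set ℝ} (hM : IsMeagre M) {a b : ℝ} (hab : a < b)
    {P : Set ℝ} (hP : #P < 𝔠) : ∃ t, t ∈ Ioo a b ∧ t ∉ M ∧ t ∉ P := by
  by_contra h
  push_neg at h
  have hsub : Ioo a b \ M ⊆ P := fun t ht => h t ht.1 ht.2
  exact absurd ((continuum_le_diff_meager hM hab).trans (mk_le_mk_of_subset hsub)) hP.not_ge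

/-- Kuratowski-Ulam fragment: the set of `x` whose vertical fiber of a meager set
is nonmeager, is meager. -/
lemma ku {M : Set (ℝ × ℝ)} (hM : IsMeagre M) :
    IsMeagre {x : ℝ | ¬ IsMeagre {y : ℝ | (x, y) ∈ M}} := by
  obtain ⟨S, hnwd, hcnt, hsub⟩ := isMeagre_iff_countable_union_isNowhereDense.1 hM
  rcases S.eq_empty_or_nonempty with rfl | hne
  · have : M = ∅ := by simpa using hsub
    subst this
    have : {x : ℝ | ¬ IsMeagre {y : ℝ | (x, y) ∈ (∅ : Set (ℝ×ℝ))}} = ∅ := by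
      ext x; simp [IsMeagre.empty]
    rw [this]; exact IsMeagre.empty
  obtain ⟨g, hg⟩ := (Set.countable_iff_exists_surjective hne).1 hcnt
  set F : ℕ → Set (ℝ × ℝ) := fun n => closure (g n) with hF
  have hFc : ∀ n, IsClosed (F n) := fun n => isClosed_closure
  have hFnwd : ∀ n, IsNowhereDense (F n) := fun n => (hnwd _ (g n).2).closure
  have hMF : M ⊆ ⋃ n, F n := by
    intro p hp
    obtain ⟨t, htS, hpt⟩ := hsub hp
    obtain ⟨n, hn⟩ := hg ⟨t, htS⟩
    exact mem_iUnion.2 ⟨n, by rw [hF]; exact subset_closure (by rw [hn]; exact hpt)⟩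
  -- bad sets
  set Bad : ℕ × ℚ × ℚ → Set ℝ := fun nq =>
    if h : (nq.2.1 : ℝ) < nq.2.2 then
      {x | ∀ y ∈ Icc (nq.2.1 : ℝ) (nq.2.2 : ℝ), (x, y) ∈ F nq.1} else ∅ with hBad
  have hBadnwd : ∀ nq, IsNowhereDense (Bad nq) := by
    rintro ⟨n, q₁, q₂⟩
    by_cases h : (q₁ : ℝ) < q₂
    · have hcl : IsClosed (Bad (n, q₁, q₂)) := by
        rw [hBad]; simp only [dif_pos h]
        have : {x : ℝ | ∀ y ∈ Icc (q₁ : ℝ) (q₂ : ℝ), (x, y) ∈ F n}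
            = ⋂ y ∈ Icc (q₁ : ℝ) (q₂ : ℝ), {x | (x, y) ∈ F n} := by
          ext x; simp
        rw [this]
        exact isClosed_biInter fun y _ => (hFc n).preimage (Continuous.prodMk_left y)
      rw [hcl.isNowhereDense_iff, eq_empty_iff_forall_notMem]
      intro x hx
      obtain ⟨ε, hε, hball⟩ := Metric.isOpen_iff.1 isOpen_interior x hx
      have hbox : Ioo (x - ε) (x + ε) ×ˢ Ioo (q₁ : ℝ) q₂ ⊆ F n := by
        rintro ⟨u, y⟩ ⟨hu, hy⟩
        have hu' : u ∈ Metric.ball x ε := by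
          rw [Real.ball_eq_Ioo]; exact hu
        have := interior_subset (hball hu')
        rw [hBad] at this; simp only [dif_pos h] at this
        exact this y ⟨hy.1.le, hy.2.le⟩
      have : Ioo (x - ε) (x + ε) ×ˢ Ioo (q₁ : ℝ) q₂ ⊆ interior (closure (F n)) := by
        refine subset_trans ?_ (interior_mono (subset_closure))
        rw [← (isOpen_Ioo.prod isOpen_Ioo).interior_eq]
        exact interior_mono hbox
      have hne' : (Ioo (x - ε) (x + ε) ×ˢ Ioo (q₁ : ℝ) q₂).Nonempty := by
        refine ⟨(x, (q₁ + q₂) / 2), ⟨?_, ?_⟩⟩ <;> constructor <;> push_cast <;> linarith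
      obtain ⟨p, hp⟩ := hne'
      have := this hp
      rw [hFnwd n] at this
      exact this
    · rw [hBad]; simp only [dif_neg h]; exact isNowhereDense_empty
  refine IsMeagre.mono ?_ (isMeagre_iUnion' (s := fun nq => Bad nq)
    (fun nq => nwd_isMeagre (hBadnwd nq)))
  intro x hx
  rw [mem_setOf_eq] at hx
  by_contra hxn
  apply hx
  have hfib : {y : ℝ | (x, y) ∈ M} ⊆ ⋃ n, {y : ℝ | (x, y) ∈ F n} := by
    intro y hy
    obtain ⟨_, ⟨n, rfl⟩, hn⟩ := hMF hy
    exact mem_iUnion.2 ⟨n, hn⟩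
  refine IsMeagre.mono hfib (isMeagre_iUnion' (fun n => nwd_isMeagre ?_))
  have hcl : IsClosed {y : ℝ | (x, y) ∈ F n} := (hFc n).preimage (Continuous.prodMk_right x)
  rw [hcl.isNowhereDense_iff, eq_empty_iff_forall_notMem]
  intro y hy
  obtain ⟨ε, hε, hball⟩ := Metric.isOpen_iff.1 isOpen_interior y hy
  obtain ⟨q₁, hq₁, hq₁'⟩ := exists_rat_btwn (show y - ε < y by linarith)
  obtain ⟨q₂, hq₂, hq₂'⟩ := exists_rat_btwn (show y < y + ε by linarith)
  apply hxn
  refine mem_iUnion.2 ⟨(n, q₁, q₂), ?_⟩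
  rw [hBad]
  have hq : (q₁ : ℝ) < q₂ := hq₁'.trans hq₂
  simp only [dif_pos hq, mem_setOf_eq]
  intro z hz
  have : z ∈ Metric.ball y ε := by
    rw [Real.ball_eq_Ioo]
    exact ⟨lt_of_lt_of_le hq₁ (le_trans (le_refl _) hz.1), lt_of_le_of_lt hz.2 hq₂'⟩
  have hz2 : z ∈ {y : ℝ | (x, y) ∈ F n} := interior_subset (hball this)
  exact hz2

lemma sin_ne_zero_of_ne {α β : ℝ} (hα : α ∈ Ico 0 Real.pi) (hβ : β ∈ Ico 0 Real.pi)
    (hne : β ≠ α) : Real.sin (β - α) ≠ 0 := by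
  rcases lt_or_gt_of_ne hne with h | h
  · have h1 : 0 < α - β := by linarith
    have h2 : α - β < Real.pi := by rcases hα with ⟨h3, h4⟩; rcases hβ with ⟨h5, h6⟩; linarith
    have := Real.sin_pos_of_pos_of_lt_pi h1 h2
    rw [show β - α = -(α - β) by ring, Real.sin_neg]
    linarith
  · have h1 : 0 < β - α := by linarith
    have h2 : β - α < Real.pi := by rcases hα with ⟨h3, h4⟩; rcases hβ with ⟨h5, h6⟩; linarith
    exact (Real.sin_pos_of_pos_of_lt_pi h1 h2).ne'

lemma sin_eq_zero_Ico {α : ℝ} (hα : α ∈ Ico 0 Real.pi) (h : Real.sin α = 0) : α = 0 := by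
  by_contra hne
  exact (Real.sin_pos_of_pos_of_lt_pi (lt_of_le_of_ne hα.1 (Ne.symm hne)) hα.2).ne' h



lemma card_lt_union {P Q : Set ℝ} (hP : #P < 𝔠) (hQ : #Q < 𝔠) : #(P ∪ Q : Set ℝ) < 𝔠 :=
  lt_of_le_of_lt (mk_union_le _ _) (add_lt_of_lt aleph0_le_continuum hP hQ)

/-- Finding a point of a nonmeager-represented set avoiding few points and few lines. -/
lemma plane_point {B U M : Set (ℝ × ℝ)} (hU : IsOpen U) (hne : U.Nonempty)
    (hM : IsMeagre M) (hUB : U \ M ⊆ B) {P : Set (ℝ × ℝ)} (hP : #P < 𝔠)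
    {F : Set (ℝ × ℝ)} (hF : #F < 𝔠) :
    ∃ p, p ∈ B ∧ p ∉ P ∧ Avoid F p := by
  obtain ⟨z, hz⟩ := hne
  obtain ⟨ε, hε, hball⟩ := Metric.isOpen_iff.1 hU z hz
  have hbox : Ioo (z.1 - ε) (z.1 + ε) ×ˢ Ioo (z.2 - ε) (z.2 + ε) ⊆ U := by
    refine subset_trans ?_ hball
    rw [← ball_prod_same, ← Real.ball_eq_Ioo, ← Real.ball_eq_Ioo]
  -- choose x
  have hPx : #((Prod.snd '' F) : Set ℝ) < 𝔠 := lt_of_le_of_lt mk_image_le hF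
  obtain ⟨x, hxI, hxM, hxP⟩ := exists_avoid (ku hM) (show z.1 - ε < z.1 + ε by linarith) hPx
  -- choose y
  have hfib : IsMeagre {y : ℝ | (x, y) ∈ M} := not_not.1 (by simpa using hxM)
  set Py : Set ℝ := (Prod.snd '' P) ∪
    ((fun q : ℝ × ℝ => (q.2 - x * Real.cos q.1) / Real.sin q.1) '' F) with hPy
  have hPyc : #Py < 𝔠 :=
    card_lt_union (lt_of_le_of_lt mk_image_le hP) (lt_of_le_of_lt mk_image_le hF)
  obtain ⟨y, hyI, hyM, hyP⟩ := exists_avoid hfib (show z.2 - ε < z.2 + ε by linarith) hPyc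
  refine ⟨(x, y), hUB ⟨hbox ⟨hxI, hyI⟩, hyM⟩, ?_, ?_⟩
  · intro hmem
    exact hyP (Or.inl ⟨(x, y), hmem, rfl⟩)
  · rintro ⟨β, s⟩ hq hβ heq
    by_cases hs : Real.sin β = 0
    · have hβ0 : β = 0 := sin_eq_zero_Ico hβ hs
      rw [proj] at heq
      simp only [hβ0, Real.cos_zero, Real.sin_zero, mul_one, mul_zero, add_zero] at heq
      exact hxP ⟨(β, s), hq, heq.symm ▸ rfl⟩
    · apply hyP
      refine Or.inr ⟨(β, s), hq, ?_⟩
      rw [proj] at heq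
      field_simp
      linarith [heq]

lemma chord_point {α t : ℝ} (hα : α ∈ Ico 0 Real.pi) (ht : t ∈ Ioo (-1 : ℝ) 1)
    {P : Set (ℝ × ℝ)} (hP : #P < 𝔠) {F : Set (ℝ × ℝ)} (hF : #F < 𝔠)
    (hFt : ∀ q ∈ F, q.1 = α → q.2 ≠ t) :
    ∃ p, p ∈ unitDisc ∧ proj α p = t ∧ p ∉ P ∧ Avoid F p := by
  have ht2 : 1 - t ^ 2 > 0 := by nlinarith [ht.1, ht.2]
  set w := Real.sqrt (1 - t ^ 2) with hw
  have hw0 : 0 < w := Real.sqrt_pos.2 ht2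
  set bad : Set ℝ := ((fun p : ℝ × ℝ => -p.1 * Real.sin α + p.2 * Real.cos α) '' P) ∪
    ((fun q : ℝ × ℝ => (q.2 - t * Real.cos (q.1 - α)) / Real.sin (q.1 - α)) '' F) with hbad
  have hbadc : #bad < 𝔠 :=
    card_lt_union (lt_of_le_of_lt mk_image_le hP) (lt_of_le_of_lt mk_image_le hF)
  obtain ⟨s, hsI, -, hsP⟩ := exists_avoid IsMeagre.empty (show -w < w by linarith) hbadc
  have hs2 : s ^ 2 < 1 - t ^ 2 := by
    have : s ^ 2 < w ^ 2 := by nlinarith [hsI.1, hsI.2]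
    rwa [hw, Real.sq_sqrt ht2.le] at this
  set p : ℝ × ℝ := (t * Real.cos α - s * Real.sin α, t * Real.sin α + s * Real.cos α) with hp
  have hproj : ∀ β : ℝ, proj β p = t * Real.cos (β - α) + s * Real.sin (β - α) := by
    intro β
    rw [proj, hp, Real.cos_sub, Real.sin_sub]
    ring
  refine ⟨p, ?_, ?_, ?_, ?_⟩
  · rw [unitDisc, mem_setOf_eq, hp]
    have := Real.sin_sq_add_cos_sq α
    dsimp only
    nlinarith [hs2]
  · rw [hproj, sub_self, Real.cos_zero, Real.sin_zero]; ring
  · intro hmem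
    apply hsP
    refine Or.inl ⟨p, hmem, ?_⟩
    rw [hp]
    have := Real.sin_sq_add_cos_sq α
    dsimp only
    linear_combination s * this
  · rintro ⟨β, s₀⟩ hq hβ heq
    by_cases hcase : β = α
    · subst hcase
      rw [hproj, sub_self, Real.cos_zero, Real.sin_zero] at heq
      exact hFt (β, s₀) hq rfl (by linarith [heq])
    · have hsin := sin_ne_zero_of_ne hα hβ hcase
      apply hsP
      refine Or.inr ⟨(β, s₀), hq, ?_⟩
      rw [hproj] at heq
      field_simp
      linarith [heq]

lemma nwd_preimage {X : Type*} [TopologicalSpace X] {D t : Set X}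
    (hD : D ⊆ closure (interior D)) (ht : IsNowhereDense t) :
    IsNowhereDense ((Subtype.val : D → X) ⁻¹' t) := by
  rw [IsNowhereDense, eq_empty_iff_forall_notMem]
  intro y hy
  have h1 : closure ((Subtype.val : D → X) ⁻¹' t) ⊆ Subtype.val ⁻¹' closure t :=
    continuous_subtype_val.closure_preimage_subset t
  have h2 : y ∈ interior (Subtype.val ⁻¹' closure t) :=
    interior_mono h1 hy
  obtain ⟨O, hOsub, hO, hyO⟩ := mem_interior.1 h2
  obtain ⟨V, hV, hVO⟩ := isOpen_induced_iff.1 hO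
  have hyV : (y : X) ∈ V := by rw [← hVO] at hyO; exact hyO
  have hyD : (y : X) ∈ closure (interior D) := hD y.2
  obtain ⟨z, hzV, hzD⟩ := mem_closure_iff.1 hyD V hV hyV
  have hW : V ∩ interior D ⊆ closure t := by
    intro w hw
    have hwD : w ∈ D := interior_subset hw.2
    have : (⟨w, hwD⟩ : D) ∈ O := by rw [← hVO]; exact hw.1
    exact hOsub this
  have : z ∈ interior (closure t) :=
    mem_interior.2 ⟨V ∩ interior D, hW, hV.inter isOpen_interior, hzV, hzD⟩
  rw [ht] at this
  exact this

lemma meagerIn_of_isMeagre {X : Type*} [TopologicalSpace X] {D B : Set X}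
    (hD : D ⊆ closure (interior D)) (h : IsMeagre B) : MeagerIn D B := by
  obtain ⟨S, hnwd, hcnt, hsub⟩ := isMeagre_iff_countable_union_isNowhereDense.1 h
  rw [MeagerIn, isMeagre_iff_countable_union_isNowhereDense]
  refine ⟨(fun t => (Subtype.val : D → X) ⁻¹' t) '' S, ?_, hcnt.image _, ?_⟩
  · rintro _ ⟨t, htS, rfl⟩
    exact nwd_preimage hD (hnwd t htS)
  · intro y hy
    obtain ⟨t, htS, hyt⟩ := hsub hy
    exact ⟨Subtype.val ⁻¹' t, ⟨t, htS, rfl⟩, hyt⟩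

lemma disc_regular : unitDisc ⊆ closure (interior unitDisc) := by
  have hO : IsOpen {p : ℝ × ℝ | p.1 ^ 2 + p.2 ^ 2 < 1} := by
    have : Continuous fun p : ℝ × ℝ => p.1 ^ 2 + p.2 ^ 2 := by fun_prop
    exact isOpen_lt this continuous_const
  have hOsub : {p : ℝ × ℝ | p.1 ^ 2 + p.2 ^ 2 < 1} ⊆ interior unitDisc :=
    hO.subset_interior_iff.2 (fun p hp => show p.1 ^ 2 + p.2 ^ 2 ≤ 1 from le_of_lt hp)
  intro p hp
  refine closure_mono hOsub ?_
  have : Filter.Tendsto (fun c : ℝ => (c * p.1, c * p.2)) (nhdsWithin 1 (Iio 1)) (nhds p) := by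
    have hc : Filter.Tendsto (fun c : ℝ => (c * p.1, c * p.2)) (nhds 1) (nhds (1 * p.1, 1 * p.2)) := by
      exact ((continuous_id.mul continuous_const).prodMk
        (continuous_id.mul continuous_const)).tendsto 1
    rw [one_mul, one_mul] at hc
    exact hc.mono_left nhdsWithin_le_nhds
  refine mem_closure_of_tendsto this ?_
  filter_upwards [Ioo_mem_nhdsLT_of_mem (show (1:ℝ) ∈ Ioc 0 1 by simp)] with c hc
  have hp1 : p.1 ^ 2 + p.2 ^ 2 ≤ 1 := hp
  have hc0 : 0 ≤ c := hc.1.le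
  have hc1 : c < 1 := hc.2
  show (c * p.1) ^ 2 + (c * p.2) ^ 2 < 1
  nlinarith [mul_nonneg (mul_nonneg hc0 hc0) (sub_nonneg.2 hp1),
    mul_pos (sub_pos.2 hc1) (show (0:ℝ) < 1 + c by linarith)]

lemma Icc_regular : (Icc (-1 : ℝ) 1 : Set ℝ) ⊆ closure (interior (Icc (-1 : ℝ) 1)) := by
  rw [interior_Icc, closure_Ioo (by norm_num : (-1 : ℝ) ≠ 1)]

-- representation of nonmeager measurable sets
lemma nonmeager_rep {X : Type*} [TopologicalSpace X] [MeasurableSpace X] [BorelSpace X]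
    {B : Set X} (hB : MeasurableSet B) (hnm : ¬ IsMeagre B) :
    ∃ U, IsOpen U ∧ U.Nonempty ∧ IsMeagre (U \ B) := by
  obtain ⟨U, hUo, hUeq⟩ := hB.baireMeasurableSet.residualEq_isOpen
  have hE : {x | (x ∈ B) = (x ∈ U)} ∈ residual X := hUeq
  have hUB : IsMeagre (U \ B) := by
    rw [IsMeagre]
    refine mem_of_superset hE ?_
    intro x hx hmem
    rw [mem_setOf_eq] at hx
    exact hmem.2 (hx ▸ hmem.1)
  have hBU : IsMeagre (B \ U) := by
    rw [IsMeagre]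
    refine mem_of_superset hE ?_
    intro x hx hmem
    rw [mem_setOf_eq] at hx
    exact hmem.2 (hx ▸ hmem.1)
  refine ⟨U, hUo, ?_, hUB⟩
  rcases U.eq_empty_or_nonempty with rfl | hne
  · exact absurd (hBU.mono (by simp)) hnm
  · exact hne

lemma line_rep {B : Set ℝ} (hB : MeasurableSet B) (hsub : B ⊆ Icc (-1 : ℝ) 1)
    (hnm : ¬ IsMeagre B) :
    ∃ u v M, u < v ∧ Ioo u v ⊆ Ioo (-1 : ℝ) 1 ∧ IsMeagre M ∧ Ioo u v \ M ⊆ B := by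
  obtain ⟨U, hUo, hUne, hUB⟩ := nonmeager_rep hB hnm
  have hUIcc : U ⊆ Icc (-1 : ℝ) 1 := by
    by_contra hc
    obtain ⟨x, hxU, hxI⟩ := not_subset.1 hc
    have hopen : IsOpen (U ∩ (Icc (-1 : ℝ) 1)ᶜ) := hUo.inter isClosed_Icc.isOpen_compl
    have hsub2 : U ∩ (Icc (-1 : ℝ) 1)ᶜ ⊆ U \ B := fun y hy => ⟨hy.1, fun hB' => hy.2 (hsub hB')⟩
    exact open_nonmeager hopen ⟨x, hxU, hxI⟩ (hUB.mono hsub2)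
  have hUIoo : U ⊆ Ioo (-1 : ℝ) 1 := by
    rw [← interior_Icc]
    exact hUo.subset_interior_iff.2 hUIcc
  obtain ⟨z, hz⟩ := hUne
  obtain ⟨ε, hε, hball⟩ := Metric.isOpen_iff.1 hUo z hz
  rw [Real.ball_eq_Ioo] at hball
  refine ⟨z - ε, z + ε, U \ B, by linarith, fun t ht => hUIoo (hball ht), hUB, ?_⟩
  rintro t ⟨htI, htM⟩
  by_contra htB
  exact htM ⟨hball htI, htB⟩

lemma card_measurable_le {X : Type*} [TopologicalSpace X] [SecondCountableTopology X]
    [MeasurableSpace X] [BorelSpace X] : #{s : Set X | MeasurableSet s} ≤ 𝔠 := by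
  have h : ‹MeasurableSpace X› = MeasurableSpace.generateFrom
      (TopologicalSpace.countableBasis X) := by
    rw [BorelSpace.measurable_eq (α := X),
      (TopologicalSpace.isBasis_countableBasis X).borel_eq_generateFrom]
  have hc : #(TopologicalSpace.countableBasis X) ≤ 𝔠 :=
    le_trans (mk_le_aleph0_iff.2 (TopologicalSpace.countable_countableBasis X)) aleph0_le_continuum
  have := MeasurableSpace.cardinal_measurableSet_le_continuum hc
  rw [h]
  exact this

-- ## The machinery

def GoodD : Type := {B : Set (ℝ × ℝ) // B ⊆ unitDisc ∧ MeasurableSet B ∧ ¬MeagerIn unitDisc B}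
def GoodL : Type := {q : ℝ × Set ℝ // q.1 ∈ Ico 0 Real.pi ∧ q.2 ⊆ Icc (-1:ℝ) 1 ∧
    MeasurableSet q.2 ∧ ¬MeagerIn (Icc (-1:ℝ) 1) q.2}
def DTask : Type := GoodD ⊕ GoodL

abbrev St : Type := Option (ℝ × ℝ) × Option (ℝ × ℝ) × Option (ℝ × ℝ)

def Spec (T : Option DTask) (P E F : Set (ℝ × ℝ)) (c : St) : Prop :=
  (∀ x, c.1 = some x → x ∈ unitDisc ∧ x ∉ E ∧ Avoid F x
      ∧ (∀ y, c.2.1 = some y → x ≠ y) ∧ (∀ q, c.2.2 = some q → proj q.1 x ≠ q.2))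
  ∧ (∀ y, c.2.1 = some y → y ∉ P)
  ∧ (∀ q, c.2.2 = some q → q.1 ∈ Ico 0 Real.pi ∧ ∀ x ∈ P, proj q.1 x ≠ q.2)
  ∧ (∀ B hB, T = some (Sum.inl (⟨B, hB⟩ : GoodD)) →
      (∃ x, c.1 = some x ∧ x ∈ B) ∧ (∃ y, c.2.1 = some y ∧ y ∈ B))
  ∧ (∀ α B hq, T = some (Sum.inr (⟨(α, B), hq⟩ : GoodL)) →
      (∃ x, c.1 = some x ∧ proj α x ∈ B) ∧ (∃ q, c.2.2 = some q ∧ q.1 = α ∧ q.2 ∈ B))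

lemma one_lt_c : (1 : Cardinal) < 𝔠 := lt_of_lt_of_le one_lt_aleph0 aleph0_le_continuum

lemma exists_spec (T : Option DTask) (P E F : Set (ℝ × ℝ))
    (hP : #P < 𝔠) (hE : #E < 𝔠) (hF : #F < 𝔠) : ∃ c : St, Spec T P E F c := by
  rcases T with _ | (⟨B, hB⟩ | ⟨⟨α, B⟩, hq⟩)
  · refine ⟨(none, none, none), ?_⟩
    refine ⟨by simp, by simp, by simp, by simp, by simp⟩
  · -- disc task
    have hnm : ¬ IsMeagre B := fun h => hB.2.2 (meagerIn_of_isMeagre disc_regular h)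
    obtain ⟨U, hUo, hUne, hUB⟩ := nonmeager_rep hB.2.1 hnm
    have hrep : U \ (U \ B) ⊆ B := by
      rintro x ⟨hxU, hxM⟩
      by_contra hxB
      exact hxM ⟨hxU, hxB⟩
    obtain ⟨y, hyB, hyP, -⟩ := plane_point hUo hUne hUB hrep hP
      (F := (∅ : Set (ℝ × ℝ))) (by rw [mk_emptyCollection]; exact lt_of_lt_of_le aleph0_pos aleph0_le_continuum)
    have hE' : #(insert y E : Set (ℝ × ℝ)) < 𝔠 :=
      lt_of_le_of_lt mk_insert_le (add_lt_of_lt aleph0_le_continuum hE one_lt_c)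
    obtain ⟨x, hxB, hxE, hxAv⟩ := plane_point hUo hUne hUB hrep hE' hF
    refine ⟨(some x, some y, none), ?_, ?_, by simp, ?_, by rintro _ _ _ ⟨⟩⟩
    · rintro x' hx'
      rw [Option.some_inj] at hx'
      subst hx'
      refine ⟨hB.1 hxB, fun h => hxE (mem_insert_of_mem _ h), hxAv, ?_, by simp⟩
      rintro y' hy'
      rw [Option.some_inj] at hy'
      subst hy'
      exact fun h => hxE (h ▸ mem_insert _ _)
    · rintro y' hy'
      rw [Option.some_inj] at hy'
      subst hy'
      exact hyP
    · rintro B' hB' heq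
      replace heq := Option.some.inj heq
      have h1 : (⟨B, hB⟩ : GoodD) = ⟨B', hB'⟩ := Sum.inl.inj heq
      have h2 : B = B' := congrArg Subtype.val h1
      subst h2
      exact ⟨⟨x, rfl, hxB⟩, ⟨y, rfl, hyB⟩⟩
  · -- line task
    have hnm : ¬ IsMeagre B := fun h => hq.2.2.2 (meagerIn_of_isMeagre Icc_regular h)
    obtain ⟨u, v, M, huv, hIoo, hM, hsubB⟩ := line_rep hq.2.2.1 hq.2.1 hnm
    have hPim : #((fun x : ℝ × ℝ => proj α x) '' P : Set ℝ) < 𝔠 := lt_of_le_of_lt mk_image_le hP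
    obtain ⟨tf, htfI, htfM, htfP⟩ := exists_avoid hM huv hPim
    have htfB : tf ∈ B := hsubB ⟨htfI, htfM⟩
    have hins : #(insert tf (Prod.snd '' F) : Set ℝ) < 𝔠 :=
      lt_of_le_of_lt mk_insert_le (add_lt_of_lt aleph0_le_continuum
        (lt_of_le_of_lt mk_image_le hF) one_lt_c)
    obtain ⟨tp, htpI, htpM, htpP⟩ := exists_avoid hM huv hins
    have htpB : tp ∈ B := hsubB ⟨htpI, htpM⟩
    have htp1 : tp ∈ Ioo (-1 : ℝ) 1 := hIoo htpI
    have hF' : #(insert (α, tf) F : Set (ℝ × ℝ)) < 𝔠 :=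
      lt_of_le_of_lt mk_insert_le (add_lt_of_lt aleph0_le_continuum hF one_lt_c)
    have hFt : ∀ q ∈ insert (α, tf) F, q.1 = α → q.2 ≠ tp := by
      rintro q hqmem - hq2
      rcases hqmem with rfl | hqF
      · exact htpP (hq2 ▸ mem_insert _ _)
      · exact htpP (mem_insert_of_mem _ ⟨q, hqF, hq2⟩)
    obtain ⟨x, hxD, hxproj, hxE, hxAv⟩ := chord_point hq.1 htp1 hE hF' hFt
    refine ⟨(some x, none, some (α, tf)), ?_, by simp, ?_, by rintro _ _ ⟨⟩, ?_⟩
    · rintro x' hx'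
      rw [Option.some_inj] at hx'
      subst hx'
      refine ⟨hxD, hxE, fun q hqF hq1 => hxAv q (mem_insert_of_mem _ hqF) hq1, by simp, ?_⟩
      rintro q' hq'
      rw [Option.some_inj] at hq'
      subst hq'
      exact hxAv (α, tf) (mem_insert _ _) hq.1
    · rintro q' hq'
      rw [Option.some_inj] at hq'
      subst hq'
      refine ⟨hq.1, fun p hpP hproj => htfP ⟨p, hpP, hproj⟩⟩
    · rintro α' B' hq'' heq
      replace heq := Option.some.inj heq
      have h1 : (⟨(α, B), hq⟩ : GoodL) = ⟨(α', B'), hq''⟩ := Sum.inr.inj heq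
      have h2 : ((α, B) : ℝ × Set ℝ) = (α', B') := congrArg Subtype.val h1
      have hα' : α = α' := congrArg Prod.fst h2
      have hB' : B = B' := congrArg Prod.snd h2
      subst hα'; subst hB'
      exact ⟨⟨x, rfl, hxproj ▸ htpB⟩, ⟨(α, tf), rfl, rfl, htfB⟩⟩

-- ## index type
abbrev II : Type := (Cardinal.continuum.ord).ToType

lemma card_II : #II = 𝔠 := by rw [Cardinal.mk_toType, Cardinal.card_ord]

lemma small_Iio (i : II) : #(Iio i) < 𝔠 := Cardinal.mk_Iio_ord_toType i

lemma small_opt (i : II) (f : ∀ j : II, j < i → Option (ℝ × ℝ)) :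
    #{x : ℝ × ℝ | ∃ j, ∃ hj : j < i, f j hj = some x} < 𝔠 := by
  have hsub : {x : ℝ × ℝ | ∃ j, ∃ hj : j < i, f j hj = some x} ⊆
      range (fun j : Iio i => (f j.1 j.2).getD (0, 0)) := by
    rintro x ⟨j, hj, hx⟩
    exact ⟨⟨j, hj⟩, by simp [hx]⟩
  exact lt_of_le_of_lt ((mk_le_mk_of_subset hsub).trans mk_range_le) (small_Iio i)

noncomputable def body (te : II → Option DTask) (i : II) (rec : ∀ j : II, j < i → St) : St :=
  Classical.choose (exists_spec (te i)
    {x | ∃ j, ∃ hj : j < i, (rec j hj).1 = some x}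
    {y | ∃ j, ∃ hj : j < i, (rec j hj).2.1 = some y}
    {q | ∃ j, ∃ hj : j < i, (rec j hj).2.2 = some q}
    (small_opt i fun j hj => (rec j hj).1)
    (small_opt i fun j hj => (rec j hj).2.1)
    (small_opt i fun j hj => (rec j hj).2.2))

noncomputable def run (te : II → Option DTask) : II → St :=
  WellFounded.fix wellFounded_lt (body te)

lemma run_eq (te : II → Option DTask) (i : II) :
    run te i = body te i (fun j _ => run te j) :=
  WellFounded.fix_eq _ _ _

def Pset (te : II → Option DTask) (i : II) : Set (ℝ × ℝ) :=
  {x | ∃ j, ∃ _ : j < i, (run te j).1 = some x}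
def Eset (te : II → Option DTask) (i : II) : Set (ℝ × ℝ) :=
  {y | ∃ j, ∃ _ : j < i, (run te j).2.1 = some y}
def Fset (te : II → Option DTask) (i : II) : Set (ℝ × ℝ) :=
  {q | ∃ j, ∃ _ : j < i, (run te j).2.2 = some q}

lemma spec_run (te : II → Option DTask) (i : II) :
    Spec (te i) (Pset te i) (Eset te i) (Fset te i) (run te i) := by
  rw [Pset, Eset, Fset, run_eq]
  exact Classical.choose_spec _

-- ## cardinality of tasks
lemma card_goodD : #GoodD ≤ 𝔠 := by
  have hinj : Function.Injective
      (fun B : GoodD => (⟨B.1, B.2.2.1⟩ : {s : Set (ℝ × ℝ) | MeasurableSet s})) := by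
    rintro ⟨B, hB⟩ ⟨B', hB'⟩ h
    simp only [Subtype.mk.injEq] at h
    exact Subtype.ext h
  exact (mk_le_of_injective hinj).trans card_measurable_le

lemma card_goodL : #GoodL ≤ 𝔠 := by
  have hinj : Function.Injective
      (fun q : GoodL => ((q.1.1, ⟨q.1.2, q.2.2.2.1⟩) : ℝ × {s : Set ℝ | MeasurableSet s})) := by
    rintro ⟨⟨α, B⟩, h⟩ ⟨⟨α', B'⟩, h'⟩ heq
    simp only [Prod.mk.injEq, Subtype.mk.injEq] at heq
    exact Subtype.ext (Prod.ext heq.1 heq.2)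
  refine (mk_le_of_injective hinj).trans ?_
  rw [mk_prod, lift_id, lift_id]
  calc #ℝ * #{s : Set ℝ | MeasurableSet s} ≤ 𝔠 * 𝔠 := by
        exact mul_le_mul' (le_of_eq mk_real) card_measurable_le
    _ = 𝔠 := continuum_mul_self

lemma card_option_task : #(Option DTask) ≤ 𝔠 := by
  rw [mk_option]
  refine (add_le_add ?_ one_lt_c.le).trans (le_of_eq continuum_add_self)
  show #DTask ≤ 𝔠
  rw [show DTask = (GoodD ⊕ GoodL) from rfl, mk_sum, lift_id, lift_id]
  exact (add_le_add card_goodD card_goodL).trans (le_of_eq continuum_add_self)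

lemma exists_enum : ∃ te : II → Option DTask, Function.Surjective te := by
  have h : #(Option DTask) ≤ #II := card_option_task.trans_eq card_II.symm
  obtain ⟨emb⟩ := (Cardinal.le_def _ _).1 h
  exact ⟨Function.invFun emb, Function.invFun_surjective emb.injective⟩


theorem stmt8 :
    ∃ A : Set (ℝ × ℝ), A ⊆ unitDisc ∧
      (∀ B : Set (ℝ × ℝ), B ⊆ unitDisc → MeasurableSet B → ¬MeagerIn unitDisc B →
        (A ∩ B).Nonempty ∧ (B \ A).Nonempty) ∧
      ∀ α ∈ Set.Ico (0 : ℝ) Real.pi,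
        ∀ B : Set ℝ, B ⊆ Set.Icc (-1 : ℝ) 1 → MeasurableSet B →
          ¬MeagerIn (Set.Icc (-1 : ℝ) 1) B →
          (proj α '' A ∩ B).Nonempty ∧ (B \ proj α '' A).Nonempty := by
  obtain ⟨te, hte⟩ := exists_enum
  set A : Set (ℝ × ℝ) := {x | ∃ i, (run te i).1 = some x} with hA
  -- invariants
  have I2 : ∀ i y, (run te i).2.1 = some y → y ∉ A := by
    rintro i y hy ⟨i', hx⟩
    rcases lt_trichotomy i' i with h | h | h
    · exact ((spec_run te i).2.1 y hy) ⟨i', h, hx⟩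
    · subst h
      exact ((spec_run te i').1 y hx).2.2.2.1 y hy rfl
    · exact ((spec_run te i').1 y hx).2.1 ⟨i, h, hy⟩
  have I3 : ∀ i q, (run te i).2.2 = some q → ∀ x ∈ A, proj q.1 x ≠ q.2 := by
    rintro i q hq x ⟨i', hx⟩
    rcases lt_trichotomy i' i with h | h | h
    · exact ((spec_run te i).2.2.1 q hq).2 x ⟨i', h, hx⟩
    · subst h
      exact ((spec_run te i').1 x hx).2.2.2.2 q hq
    · exact ((spec_run te i').1 x hx).2.2.1 q ⟨i, h, hq⟩ ((spec_run te i).2.2.1 q hq).1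
  refine ⟨A, ?_, ?_, ?_⟩
  · rintro x ⟨i, hx⟩
    exact ((spec_run te i).1 x hx).1
  · intro B hsub hmeas hnm
    obtain ⟨i, hi⟩ := hte (some (Sum.inl (⟨B, hsub, hmeas, hnm⟩ : GoodD)))
    obtain ⟨⟨x, hx, hxB⟩, ⟨y, hy, hyB⟩⟩ :=
      (spec_run te i).2.2.2.1 B ⟨hsub, hmeas, hnm⟩ hi
    exact ⟨⟨x, ⟨i, hx⟩, hxB⟩, ⟨y, hyB, I2 i y hy⟩⟩
  · intro α hα B hsub hmeas hnm
    obtain ⟨i, hi⟩ := hte (some (Sum.inr (⟨(α, B), hα, hsub, hmeas, hnm⟩ : GoodL)))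
    obtain ⟨⟨x, hx, hxB⟩, ⟨q, hqeq, hq1, hq2⟩⟩ :=
      (spec_run te i).2.2.2.2 α B ⟨hα, hsub, hmeas, hnm⟩ hi
    refine ⟨⟨proj α x, ⟨x, ⟨i, hx⟩, rfl⟩, hxB⟩, ⟨q.2, hq2, ?_⟩⟩
    rintro ⟨x', hx'A, hx'proj⟩
    exact I3 i q hqeq x' hx'A (by rw [hq1]; exact hx'proj)
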